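/- Let A be the adjacency matrix of a directed, unweighted graph on n nodes with at least one edge, let dᵒᵘᵗ = A·1, and suppose that for every k ≥ 1 the inequality n·(1ᵀAᵀAᵏ·1) ≥ (1ᵀAᵏ·1)·(1ᵀA·1) holds. Then for every α > 0 such that the Katz series x(α) = ∑ₖ αᵏ·Aᵏ·1 converges entrywise (in particular for all 0 < α < 1/ρ(A)), the out-degree generalized friendship paradox inequality holds: n·(dᵒᵘᵗᵀx(α)) ≥ (1ᵀdᵒᵘᵗ)·(1ᵀx(α)). -/

import Mathlib

open Matrix

/-- Sufficient condition for the out-degree generalized friendship paradox for Katz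
centrality on a directed graph: if `n·(1ᵀAᵀAᵏ·1) ≥ (1ᵀAᵏ·1)·(1ᵀA·1)` for all `k ≥ 1`,
then for every `α > 0` for which the Katz series converges entrywise,
`n·(dᵒᵘᵗᵀx(α)) ≥ (1ᵀdᵒᵘᵗ)·(1ᵀx(α))`. -/
theorem directed_katz_out_degree_paradox_sufficient (n : ℕ)
    (A : Matrix (Fin n) (Fin n) ℝ)
    (hA01 : ∀ i j, A i j = 0 ∨ A i j = 1)
    (hedge : ∃ i j, A i j ≠ 0)
    (dout : Fin n → ℝ) (hdout : dout = A.mulVec 1)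
    (hcond : ∀ k : ℕ, 1 ≤ k →
      (n : ℝ) * (∑ i, ∑ j, (Aᵀ * A ^ k) i j) ≥
        (∑ i, ∑ j, (A ^ k) i j) * (∑ i, ∑ j, A i j)) :
    ∀ α : ℝ, 0 < α →
      (∀ i, Summable fun k : ℕ => α ^ k * ((A ^ k).mulVec 1) i) →
      (n : ℝ) * (dout ⬝ᵥ fun i => ∑' k : ℕ, α ^ k * ((A ^ k).mulVec 1) i) ≥
        (∑ i, dout i) * (∑ i, ∑' k : ℕ, α ^ k * ((A ^ k).mulVec 1) i) := by
  intro α hα hsum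
  have hd : ∑ i, dout i = ∑ i, ∑ j, A i j := by
    subst hdout; simp [mulVec, dotProduct]
  have hkey : ∀ k : ℕ,
      (∑ i, dout i) * (∑ i, ((A ^ k).mulVec 1) i) ≤
      (n : ℝ) * (∑ i, dout i * ((A ^ k).mulVec 1) i) := by
    intro k
    have h2 : ∑ i, dout i * ((A ^ k).mulVec 1) i = ∑ i, ∑ j, (Aᵀ * A ^ k) i j := by
      subst hdout
      rw [show ∑ i, ∑ j, (Aᵀ * A ^ k) i j = ∑ j, ∑ i, (Aᵀ * A ^ k) i j from Finset.sum_comm]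
      simp only [mulVec, dotProduct, Matrix.mul_apply, transpose_apply, Pi.one_apply,
        mul_one, Finset.mul_sum, Finset.sum_mul]
      rw [Finset.sum_comm]
      refine Finset.sum_congr rfl fun i _ => ?_
      rw [Finset.sum_comm]
    have h1 : ∑ i, ((A ^ k).mulVec 1) i = ∑ i, ∑ j, (A ^ k) i j := by
      simp [mulVec, dotProduct]
    rw [h2, h1, hd]
    rcases Nat.eq_zero_or_pos k with hk | hk
    · subst hk
      simp only [pow_zero, Matrix.mul_one]
      have h3 : ∑ i : Fin n, ∑ j : Fin n, (1 : Matrix (Fin n) (Fin n) ℝ) i j = n := by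
        simp [Matrix.one_apply]
      have h4 : ∑ i : Fin n, ∑ j : Fin n, Aᵀ i j = ∑ i, ∑ j, A i j := by
        rw [show ∑ i : Fin n, ∑ j : Fin n, Aᵀ i j = ∑ j : Fin n, ∑ i : Fin n, Aᵀ i j from Finset.sum_comm]; simp [transpose_apply]
      rw [h3, h4, mul_comm]
    · have := hcond k hk
      linarith
  set f : ℕ → Fin n → ℝ := fun k i => α ^ k * ((A ^ k).mulVec 1) i with hf
  have hsum2 : ∀ i : Fin n, Summable fun k => dout i * f k i := fun i => (hsum i).mul_left _
  have hswap : (dout ⬝ᵥ fun i => ∑' k : ℕ, f k i) = ∑' k, ∑ i, dout i * f k i := by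
    rw [dotProduct]
    rw [Summable.tsum_finsetSum (fun i _ => hsum2 i)]
    refine Finset.sum_congr rfl fun i _ => ?_
    exact (tsum_mul_left).symm
  have hswap2 : (∑ i, ∑' k : ℕ, f k i) = ∑' k, ∑ i, f k i := by
    rw [Summable.tsum_finsetSum (fun i _ => hsum i)]
  rw [ge_iff_le, hswap, hswap2, ← tsum_mul_left, ← tsum_mul_left]
  refine Summable.tsum_le_tsum ?_ (Summable.mul_left _ (summable_sum fun i _ => hsum i))
    (Summable.mul_left _ (summable_sum fun i _ => hsum2 i))
  intro k
  have hαk : (0:ℝ) ≤ α ^ k := (pow_pos hα k).le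
  have : (∑ i, dout i) * ∑ i, f k i = α ^ k * ((∑ i, dout i) * ∑ i, ((A ^ k).mulVec 1) i) := by
    simp only [hf, Finset.mul_sum]
    ring_nf
  rw [this]
  have h2 : (n : ℝ) * ∑ i, dout i * f k i
      = α ^ k * ((n : ℝ) * ∑ i, dout i * ((A ^ k).mulVec 1) i) := by
    simp only [hf, Finset.mul_sum]
    ring_nf
    refine Finset.sum_congr rfl fun i _ => ?_
    ring
  rw [h2]
  exact mul_le_mul_of_nonneg_left (hkey k) hαk
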